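/- In the ℤ/2-graded tensor product A ⊗ C_n of a supercommutative superalgebra A with the Clifford algebra C_n: if K_1,…,K_n are odd elements of A and K = (K_1,…,K_n), then for every s ∈ ℝ and every i, exp(s Kᵗγ) · γ_i · exp(−s Kᵗγ) = γ_i + 2s K_i, where Kᵗγ = Σ_j K_j ⊗ γ_j. -/

import Mathlib

open scoped BigOperators

/-- In (a model of) the ℤ/2-graded tensor product `A ⊗ C_n` of a supercommutative superalgebra
`A` with the Clifford algebra `C_n`: if `K₁,…,Kₙ` are odd elements of `A` (so the `K i`
anticommute among themselves and with the odd generators `g i = 1 ⊗ γᵢ`), then for every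
`s ∈ ℝ` and every `i`, `exp(s Kᵗγ) · γᵢ · exp(−s Kᵗγ) = γᵢ + 2s Kᵢ`, where
`Kᵗγ = Σⱼ Kⱼ ⊗ γⱼ`. -/
theorem stmt5 (n : ℕ) (R : Type*) [NormedRing R] [NormedAlgebra ℂ R] [CompleteSpace R]
    (K g : Fin n → R)
    (hKK : ∀ i j : Fin n, K i * K j = -(K j * K i))
    (hKg : ∀ i j : Fin n, K i * g j = -(g j * K i))
    (hgg : ∀ j k : Fin n, g j * g k + g k * g j = if j = k then (2 : R) else 0)
    (s : ℝ) (i : Fin n) :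
    NormedSpace.exp ((s : ℂ) • ∑ j, K j * g j) * g i *
        NormedSpace.exp (-((s : ℂ) • ∑ j, K j * g j))
      = g i + ((2 * s : ℝ) : ℂ) • K i := by
  have hgK : ∀ a b : Fin n, g a * K b = -(K b * g a) := fun a b => by
    rw [hKg b a, neg_neg]
  set T : R := ∑ j, K j * g j with hT
  -- T * g i - g i * T = 2 * K i
  have hcomm : T * g i = g i * T + (2 : R) * K i := by
    have step : ∀ j : Fin n, K j * g j * g i - g i * (K j * g j)
        = K j * (if j = i then (2:R) else 0) := by
      intro j
      have h1 : g i * (K j * g j) = -(K j * g i) * g j := by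
        rw [← mul_assoc, hgK i j]
      rw [h1, ← hgg j i]
      noncomm_ring
    have : T * g i - g i * T = (2 : R) * K i := by
      rw [hT, Finset.sum_mul, Finset.mul_sum, ← Finset.sum_sub_distrib,
        Finset.sum_congr rfl (fun j _ => step j)]
      simp [mul_ite, mul_two, two_mul]
    rw [add_comm]; exact eq_add_of_sub_eq this
  -- T commutes with K i
  have hTK : Commute T (K i) := by
    rw [Commute, SemiconjBy, hT, Finset.sum_mul, Finset.mul_sum]
    refine Finset.sum_congr rfl fun j _ => ?_
    calc K j * g j * K i = K j * (g j * K i) := by rw [mul_assoc]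
      _ = K j * (-(K i * g j)) := by rw [hgK j i]
      _ = -(K j * K i) * g j := by rw [mul_neg, ← mul_assoc, neg_mul]
      _ = K i * K j * g j := by rw [← hKK i j]
      _ = K i * (K j * g j) := by rw [mul_assoc]
  -- the function whose derivative we compute
  set F : ℂ → R := fun z =>
    NormedSpace.exp (z • T) * g i * NormedSpace.exp (-(z • T)) - ((2 : ℂ) * z) • K i
    with hF
  have hderiv : ∀ z : ℂ, HasDerivAt F 0 z := by
    intro z
    set E : R := NormedSpace.exp (z • T) with hE'
    set E' : R := NormedSpace.exp (-(z • T)) with hE''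
    have hTexp : Commute T E := ((Commute.refl T).smul_right z).exp_right
    have hTexp' : Commute T E' := by
      rw [hE'', ← neg_smul]
      exact ((Commute.refl T).smul_right (-z)).exp_right
    have hKexp : Commute (K i) E := (hTK.symm.smul_right z).exp_right
    have h1 : HasDerivAt (fun z : ℂ => NormedSpace.exp (z • T))
        (E * T) z := hasDerivAt_exp_smul_const T z
    have h2 : HasDerivAt (fun z : ℂ => NormedSpace.exp (-(z • T)))
        (E' * (-T)) z := by
      have := hasDerivAt_exp_smul_const (-T) z
      simp only [smul_neg] at this
      exact this
    have h3 : HasDerivAt (fun z : ℂ => NormedSpace.exp (z • T) * g i)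
        (E * T * g i) z := h1.mul_const (g i)
    have h4 : HasDerivAt (fun z : ℂ =>
        NormedSpace.exp (z • T) * g i * NormedSpace.exp (-(z • T)))
        (E * T * g i * E' + E * g i * (E' * (-T))) z := h3.mul h2
    have h5 : HasDerivAt (fun z : ℂ => ((2 : ℂ) * z) • K i) ((2 : ℂ) • K i) z := by
      simpa using ((hasDerivAt_id z).const_mul (2 : ℂ)).smul_const (K i)
    have hEE : E * E' = 1 := by
      rw [hE', hE'', ← NormedSpace.exp_add_of_commute_of_mem_ball (𝕂 := ℂ) ((Commute.refl (z • T)).neg_right)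
        ((NormedSpace.expSeries_radius_eq_top ℂ R).symm ▸ edist_lt_top _ _)
        ((NormedSpace.expSeries_radius_eq_top ℂ R).symm ▸ edist_lt_top _ _)]
      simp
    have key : E * T * g i * E' + E * g i * (E' * (-T)) = (2 : ℂ) • K i := by
      calc E * T * g i * E' + E * g i * (E' * (-T))
          = E * (T * g i) * E' - E * (g i * (E' * T)) := by noncomm_ring
        _ = E * (g i * T + 2 * K i) * E' - E * (g i * (T * E')) := by
            rw [hcomm, hTexp'.symm.eq]
        _ = E * (2 * K i) * E' := by noncomm_ring
        _ = 2 * (E * K i * E') := by noncomm_ring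
        _ = (2 : ℂ) • K i := by
            rw [hKexp.symm.eq, mul_assoc (K i), hEE, mul_one, two_mul]
            exact (two_smul ℂ (K i)).symm
    have h6 := h4.sub h5
    rw [key, sub_self] at h6
    rw [hF]
    exact h6
  have hF0 : F 0 = g i := by simp [hF]
  have hconst : F (s : ℂ) = g i := by
    refine (is_const_of_deriv_eq_zero (fun z => (hderiv z).differentiableAt)
      (fun z => (hderiv z).deriv) _ _).trans hF0
  simp only [hF] at hconst
  have hcast : ((2 * s : ℝ) : ℂ) = (2 : ℂ) * (s : ℂ) := by push_cast; ring
  rw [hcast]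
  exact eq_add_of_sub_eq hconst
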